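/- For every integer n ≥ 1 there exists a constant C > 0 such that for all real numbers s > 0, k > 0, c ≥ k and y ≥ 0 with y·c ≥ k², one has exp(−c²/(4s)) · (1 + c²/s)^{n−1} · (1 + y·c/s)^{−(n−1/2)} ≤ C · exp(−k²/(8s)) · (1 + k²/s)^{−(n−1/2)}. (This is the combined kernel bound from the proof of Proposition 3.5: for d(g) ≤ k, d(h) > 2k and |z| > 2k one has c = d(gh⁻¹) ≥ k and y = |z−z₀| with y·c ≥ k², and the bound shows s^{n−1}·φ_s(gh⁻¹) is dominated uniformly by C·exp(−k²/(8s))·(1+k²/s)^{−(n−1/2)}.) -/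
import Mathlib

open Real

/-- Polynomial beaten by exponential: `(1+x)^(n-1) ≤ (8n)^(n-1) · exp(x/8)`. -/
lemma poly_le_exp_aux (n : ℕ) (hn : 1 ≤ n) (x : ℝ) (hx : 0 ≤ x) :
    (1 + x) ^ ((n : ℝ) - 1) ≤ (8 * n) ^ ((n : ℝ) - 1) * Real.exp (x / 8) := by
  have hn' : (1 : ℝ) ≤ (n : ℝ) := by exact_mod_cast hn
  have hm : (0 : ℝ) ≤ (n : ℝ) - 1 := by linarith
  have h8n : (1 : ℝ) ≤ 8 * n := by nlinarith
  have h1 : 1 + x ≤ 8 * n * Real.exp (x / (8 * n)) := by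
    have hexp : 1 + x / (8 * n) ≤ Real.exp (x / (8 * n)) := by
      have := Real.add_one_le_exp (x / (8 * n))
      linarith
    have h2 : 1 + x ≤ 8 * n * (1 + x / (8 * n)) := by
      have : 8 * (n : ℝ) * (x / (8 * n)) = x := by field_simp
      nlinarith
    nlinarith [Real.exp_pos (x / (8 * n))]
  calc (1 + x) ^ ((n : ℝ) - 1)
      ≤ (8 * n * Real.exp (x / (8 * n))) ^ ((n : ℝ) - 1) :=
        Real.rpow_le_rpow (by linarith) h1 hm
    _ = (8 * n) ^ ((n : ℝ) - 1) * Real.exp (x / (8 * n)) ^ ((n : ℝ) - 1) :=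
        Real.mul_rpow (by linarith) (Real.exp_pos _).le
    _ ≤ (8 * n) ^ ((n : ℝ) - 1) * Real.exp (x / 8) := by
        apply mul_le_mul_of_nonneg_left _ (Real.rpow_nonneg (by linarith) _)
        rw [← Real.exp_mul]
        apply Real.exp_le_exp.2
        rw [div_mul_eq_mul_div, div_le_div_iff₀ (by positivity) (by norm_num)]
        nlinarith

theorem combined_kernel_bound (n : ℕ) (hn : 1 ≤ n) :
    ∃ C : ℝ, 0 < C ∧ ∀ s k c y : ℝ, 0 < s → 0 < k → k ≤ c → 0 ≤ y → k ^ 2 ≤ y * c →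
      Real.exp (-(c ^ 2) / (4 * s)) * (1 + c ^ 2 / s) ^ ((n : ℝ) - 1) *
          (1 + y * c / s) ^ (-((n : ℝ) - 1 / 2)) ≤
        C * Real.exp (-(k ^ 2) / (8 * s)) * (1 + k ^ 2 / s) ^ (-((n : ℝ) - 1 / 2)) := by
  have hn' : (1 : ℝ) ≤ (n : ℝ) := by exact_mod_cast hn
  refine ⟨(8 * n) ^ ((n : ℝ) - 1), Real.rpow_pos_of_pos (by positivity) _, ?_⟩
  intro s k c y hs hk hkc hy hyc
  have hks : 0 < 1 + k ^ 2 / s := by positivity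
  have hcs : 0 ≤ c ^ 2 / s := by positivity
  -- last factor
  have hB : (1 + y * c / s) ^ (-((n : ℝ) - 1 / 2)) ≤ (1 + k ^ 2 / s) ^ (-((n : ℝ) - 1 / 2)) := by
    apply Real.rpow_le_rpow_of_nonpos hks
    · gcongr
    · linarith
  -- exponential split
  have hE : Real.exp (-(c ^ 2) / (4 * s)) ≤
      Real.exp (-(c ^ 2 / s) / 8) * Real.exp (-(k ^ 2) / (8 * s)) := by
    rw [← Real.exp_add]
    apply Real.exp_le_exp.2
    have hc2 : k ^ 2 ≤ c ^ 2 := by nlinarith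
    have e1 : -(c ^ 2) / (4 * s) = -(c^2/s)/8 + -(c^2)/(8*s) := by field_simp; ring
    rw [e1]
    gcongr _ + ?_
    rw [div_le_div_iff₀ (by positivity) (by positivity)]
    nlinarith
  have hP := poly_le_exp_aux n hn (c ^ 2 / s) hcs
  have key : Real.exp (-(c ^ 2) / (4 * s)) * (1 + c ^ 2 / s) ^ ((n : ℝ) - 1) ≤
      (8 * n) ^ ((n : ℝ) - 1) * Real.exp (-(k ^ 2) / (8 * s)) := by
    calc Real.exp (-(c ^ 2) / (4 * s)) * (1 + c ^ 2 / s) ^ ((n : ℝ) - 1)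
        ≤ (Real.exp (-(c ^ 2 / s) / 8) * Real.exp (-(k ^ 2) / (8 * s))) *
            ((8 * n) ^ ((n : ℝ) - 1) * Real.exp (c ^ 2 / s / 8)) := by
          apply mul_le_mul hE hP (Real.rpow_nonneg (by positivity) _) (by positivity)
      _ = (8 * n) ^ ((n : ℝ) - 1) * Real.exp (-(k ^ 2) / (8 * s)) *
            (Real.exp (-(c ^ 2 / s) / 8) * Real.exp (c ^ 2 / s / 8)) := by ring
      _ = (8 * n) ^ ((n : ℝ) - 1) * Real.exp (-(k ^ 2) / (8 * s)) := by
          rw [← Real.exp_add]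
          have : -(c ^ 2 / s) / 8 + c ^ 2 / s / 8 = 0 := by ring
          rw [this, Real.exp_zero, mul_one]
  calc Real.exp (-(c ^ 2) / (4 * s)) * (1 + c ^ 2 / s) ^ ((n : ℝ) - 1) *
        (1 + y * c / s) ^ (-((n : ℝ) - 1 / 2))
      ≤ Real.exp (-(c ^ 2) / (4 * s)) * (1 + c ^ 2 / s) ^ ((n : ℝ) - 1) *
        (1 + k ^ 2 / s) ^ (-((n : ℝ) - 1 / 2)) := by
        apply mul_le_mul_of_nonneg_left hB
        positivity
    _ ≤ (8 * n) ^ ((n : ℝ) - 1) * Real.exp (-(k ^ 2) / (8 * s)) *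
        (1 + k ^ 2 / s) ^ (-((n : ℝ) - 1 / 2)) := by
        apply mul_le_mul_of_nonneg_right key
        positivity
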